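/- arXiv:1104.3900 — 9 statements merged into one kernel-verified Lean document; each statement's English description precedes it below -/
import Mathlib

section
/- A pair (x1, x2) of non-negative integers with x1 ≤ x2 satisfies (x1 + x2)^2 − (x1 + x2) − 4·x1·x2 = 0 if and only if there exists a natural number m such that x1 = m(m−1)/2 and x2 = m(m+1)/2. In other words, the 2-color fair games are exactly the pairs of consecutive triangular numbers. -/
/-- The 2-color fair games are exactly the pairs of consecutive triangular numbers. -/
theorem stmt_0 (x1 x2 : ℤ) (h1 : 0 ≤ x1) (h2 : x1 ≤ x2) :
    (x1 + x2) ^ 2 - (x1 + x2) - 4 * x1 * x2 = 0 ↔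
      ∃ m : ℕ, 2 * x1 = (m : ℤ) * ((m : ℤ) - 1) ∧ 2 * x2 = (m : ℤ) * ((m : ℤ) + 1) := by
  constructor
  · intro h
    have hd : 0 ≤ x2 - x1 := by omega
    refine ⟨(x2 - x1).toNat, ?_, ?_⟩ <;>
    · rw [Int.toNat_of_nonneg hd]; nlinarith [h]
  · rintro ⟨m, hm1, hm2⟩
    nlinarith [hm1, hm2]
end

section
/- For every real number k ≥ 0, the number of natural numbers m such that (m(m−1)/2)^2 + (m(m+1)/2)^2 ≤ k^2 equals ⌊√(r(k))⌋ + 1, where r(k) = (−1 + √(1 + 8k^2))/2. Consequently the number of 2-color fair games of Euclidean norm at most k is asymptotic to 2^(1/4)·√k as k → ∞. -/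
open Filter

/-- The set of 2-color fair games (pairs of consecutive triangular numbers,
indexed by `m`) of Euclidean norm at most `k`. -/
def fairGameIndices (k : ℝ) : Set ℕ :=
  {m : ℕ | ((m * (m - 1) / 2 : ℕ) : ℝ) ^ 2 + ((m * (m + 1) / 2 : ℕ) : ℝ) ^ 2 ≤ k ^ 2}

noncomputable def r (k : ℝ) : ℝ := (-1 + Real.sqrt (1 + 8 * k ^ 2)) / 2

lemma one_le_sqrt_aux (k : ℝ) : (1 : ℝ) ≤ Real.sqrt (1 + 8 * k ^ 2) := by
  calc (1:ℝ) = Real.sqrt 1 := by simp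
    _ ≤ _ := Real.sqrt_le_sqrt (by nlinarith [sq_nonneg k])

lemma r_nonneg (k : ℝ) : 0 ≤ r k := by
  have := one_le_sqrt_aux k
  unfold r; linarith

lemma r_sq_add (k : ℝ) : r k ^ 2 + r k = 2 * k ^ 2 := by
  have hs : Real.sqrt (1 + 8 * k ^ 2) ^ 2 = 1 + 8 * k ^ 2 :=
    Real.sq_sqrt (by positivity)
  unfold r; nlinarith [hs]

lemma key_cast (m : ℕ) :
    ((m * (m - 1) / 2 : ℕ) : ℝ) ^ 2 + ((m * (m + 1) / 2 : ℕ) : ℝ) ^ 2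
      = ((m : ℝ) ^ 4 + (m : ℝ) ^ 2) / 2 := by
  cases m with
  | zero => norm_num
  | succ n =>
    have h1 : 2 ∣ (n + 1) * ((n + 1) - 1) := by
      simpa [Nat.mul_comm] using (Nat.even_mul_succ_self n).two_dvd
    have h2 : 2 ∣ (n + 1) * ((n + 1) + 1) := (Nat.even_mul_succ_self (n + 1)).two_dvd
    rw [Nat.cast_div h1 (by norm_num), Nat.cast_div h2 (by norm_num)]
    push_cast [Nat.succ_sub_one]
    field_simp
    ring

lemma mem_iff {k : ℝ} (_hk : 0 ≤ k) (m : ℕ) :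
    m ∈ fairGameIndices k ↔ (m : ℝ) ≤ Real.sqrt (r k) := by
  have hr : 0 ≤ r k := r_nonneg k
  have hrr : r k ^ 2 + r k = 2 * k ^ 2 := r_sq_add k
  rw [fairGameIndices, Set.mem_setOf_eq, key_cast,
    Real.le_sqrt (by positivity) hr]
  constructor
  · intro h
    nlinarith [sq_nonneg ((m : ℝ) ^ 2 - r k), sq_nonneg ((m : ℝ) ^ 2 + r k), sq_nonneg (m : ℝ)]
  · intro h
    nlinarith [sq_nonneg (m : ℝ), mul_le_mul h h (sq_nonneg (m : ℝ)) hr]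

lemma card_eq {k : ℝ} (hk : 0 ≤ k) :
    (fairGameIndices k).ncard = ⌊Real.sqrt (r k)⌋₊ + 1 := by
  have hset : fairGameIndices k = Set.Iic ⌊Real.sqrt (r k)⌋₊ := by
    ext m
    rw [Set.mem_Iic, Nat.le_floor_iff (Real.sqrt_nonneg _)]
    exact mem_iff hk m
  rw [hset, ← Finset.coe_Iic, Set.ncard_coe_finset, Nat.card_Iic]

lemma sqrt_sqrt_two : Real.sqrt (Real.sqrt 2) = 2 ^ ((1 : ℝ) / 4) := by
  rw [Real.sqrt_eq_rpow, Real.sqrt_eq_rpow, ← Real.rpow_mul (by norm_num : (0:ℝ) ≤ 2)]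
  norm_num

lemma sqrt_tendsto : Tendsto Real.sqrt atTop atTop := by
  apply tendsto_atTop_atTop.mpr
  intro b
  refine ⟨b ^ 2, fun a ha => ?_⟩
  calc b ≤ |b| := le_abs_self b
    _ = Real.sqrt (b ^ 2) := (Real.sqrt_sq_eq_abs b).symm
    _ ≤ Real.sqrt a := Real.sqrt_le_sqrt ha

lemma g_tendsto : Tendsto (fun k : ℝ => r k / (Real.sqrt 2 * k)) atTop (nhds 1) := by
  have h1 : Tendsto (fun k : ℝ => Real.sqrt (1 / (8 * k ^ 2) + 1)) atTop (nhds 1) := by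
    have hbase : Tendsto (fun k : ℝ => 1 / (8 * k ^ 2) + 1) atTop (nhds (0 + 1)) := by
      apply Tendsto.add _ tendsto_const_nhds
      have : Tendsto (fun k : ℝ => 8 * k ^ 2) atTop atTop :=
        Tendsto.const_mul_atTop (by norm_num) (tendsto_pow_atTop two_ne_zero)
      have h0 := this.inv_tendsto_atTop
      simp only [one_div]
      exact h0
    have := (Real.continuous_sqrt.tendsto (0 + 1)).comp hbase
    norm_num at this ⊢
    simpa [Function.comp_def] using this
  have h2 : Tendsto (fun k : ℝ => 1 / (2 * Real.sqrt 2 * k)) atTop (nhds 0) := by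
    have : Tendsto (fun k : ℝ => 2 * Real.sqrt 2 * k) atTop atTop :=
      Tendsto.const_mul_atTop (by positivity) tendsto_id
    simpa only [one_div, Pi.inv_def] using this.inv_tendsto_atTop
  have heq : ∀ᶠ k in atTop,
      Real.sqrt (1 / (8 * k ^ 2) + 1) - 1 / (2 * Real.sqrt 2 * k)
        = r k / (Real.sqrt 2 * k) := by
    filter_upwards [eventually_gt_atTop (0 : ℝ)] with k hk
    have hk0 : k ≠ 0 := hk.ne'
    have h2ne : Real.sqrt 2 ≠ 0 := by positivity
    have h8 : Real.sqrt (8 * k ^ 2) = 2 * Real.sqrt 2 * k := by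
      rw [show (8 : ℝ) * k ^ 2 = 2 * (2 * k) ^ 2 by ring, Real.sqrt_mul (by norm_num),
        Real.sqrt_sq (by positivity)]
      ring
    have hdiv : (1 : ℝ) / (8 * k ^ 2) + 1 = (1 + 8 * k ^ 2) / (8 * k ^ 2) := by
      field_simp
    rw [hdiv, Real.sqrt_div (by positivity), h8]
    unfold r
    field_simp
    ring
  refine Tendsto.congr' heq ?_
  simpa using h1.sub h2

lemma main_tendsto :
    Tendsto (fun k : ℝ => Real.sqrt (r k) / (2 ^ ((1 : ℝ) / 4) * Real.sqrt k))
      atTop (nhds 1) := by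
  have h3 := (Real.continuous_sqrt.tendsto 1).comp g_tendsto
  rw [Real.sqrt_one] at h3
  refine Tendsto.congr' ?_ h3
  filter_upwards [eventually_gt_atTop (0 : ℝ)] with k hk
  show Real.sqrt (r k / (Real.sqrt 2 * k)) = _
  rw [Real.sqrt_div (r_nonneg k), Real.sqrt_mul (Real.sqrt_nonneg 2), sqrt_sqrt_two]

/-- The number of 2-color fair games of norm at most `k` is `⌊√(r k)⌋ + 1` where
`r k = (−1 + √(1+8k²))/2`; consequently it is asymptotic to `2^(1/4)·√k`. -/
theorem stmt_1 :
    (∀ k : ℝ, 0 ≤ k → ((fairGameIndices k).ncard : ℤ) = ⌊Real.sqrt (r k)⌋ + 1) ∧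
      Tendsto (fun k : ℝ => ((fairGameIndices k).ncard : ℝ) / (2 ^ ((1 : ℝ) / 4) * Real.sqrt k))
        atTop (nhds 1) := by
  constructor
  · intro k hk
    rw [card_eq hk]
    push_cast
    rw [Int.natCast_floor_eq_floor (Real.sqrt_nonneg _)]
  · have hD : Tendsto (fun k : ℝ => 2 ^ ((1 : ℝ) / 4) * Real.sqrt k) atTop atTop :=
      Tendsto.const_mul_atTop (by positivity) sqrt_tendsto
    have hinv : Tendsto (fun k : ℝ => 1 / (2 ^ ((1 : ℝ) / 4) * Real.sqrt k)) atTop (nhds 0) := by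
      simpa only [one_div, Pi.inv_def] using hD.inv_tendsto_atTop
    have hupper : Tendsto
        (fun k : ℝ => Real.sqrt (r k) / (2 ^ ((1 : ℝ) / 4) * Real.sqrt k)
          + 1 / (2 ^ ((1 : ℝ) / 4) * Real.sqrt k)) atTop (nhds 1) := by
      simpa using main_tendsto.add hinv
    refine tendsto_of_tendsto_of_tendsto_of_le_of_le' main_tendsto hupper ?_ ?_
    · filter_upwards [eventually_ge_atTop (0 : ℝ)] with k hk
      rw [card_eq hk]
      have h1 : Real.sqrt (r k) ≤ (↑(⌊Real.sqrt (r k)⌋₊ + 1) : ℝ) := by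
        push_cast
        exact (Nat.lt_floor_add_one _).le
      gcongr
    · filter_upwards [eventually_ge_atTop (0 : ℝ)] with k hk
      rw [card_eq hk, ← add_div]
      have h1 : (↑(⌊Real.sqrt (r k)⌋₊ + 1) : ℝ) ≤ Real.sqrt (r k) + 1 := by
        push_cast
        have := Nat.floor_le (Real.sqrt_nonneg (r k))
        linarith
      gcongr
end

section
/- For every n ≥ 2, the set of tuples x ∈ ℤ^n with all coordinates strictly positive and F_n(x) = 0 is infinite; that is, there are infinitely many faithful n-color fair games. -/
open Finset

/-- `F n x = s(x)² − s(x) − 4·Σ_{i<j} x_i x_j`, whose non-negative zeros are the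
`n`-color fair games. -/
def F {n : ℕ} (x : Fin n → ℤ) : ℤ :=
  (∑ i, x i) ^ 2 - (∑ i, x i) - 4 * ∑ i, ∑ j, if i < j then x i * x j else 0

lemma P_cons {m : ℕ} (x : Fin (m+1) → ℤ) (a : ℤ) (y : Fin m → ℤ) (hx : x = Fin.cons a y) :
    (∑ i, ∑ j, if i < j then x i * x j else 0)
      = a * (∑ i, y i) + ∑ i, ∑ j, if i < j then y i * y j else 0 := by
  subst hx
  rw [Fin.sum_univ_succ]
  congr 1
  · rw [Fin.sum_univ_succ]
    simp [Fin.succ_pos, mul_sum]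
  · refine Finset.sum_congr rfl fun i _ => ?_
    rw [Fin.sum_univ_succ]
    simp [Fin.succ_lt_succ_iff]

lemma F_cons {m : ℕ} (a : ℤ) (y : Fin m → ℤ) :
    F (Fin.cons a y) = F y + a^2 - a - 2*a*(∑ i, y i) := by
  unfold F
  rw [P_cons (Fin.cons a y) a y rfl, Fin.sum_cons]
  ring

def g (m : ℕ) : Fin m → ℤ := fun i => 3 ^ (m - i.val)

lemma g_succ (m : ℕ) : g (m+1) = Fin.cons (3^(m+1)) (g m) := by
  funext i
  refine Fin.cases ?_ (fun j => ?_) i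
  · simp [g]
  · simp [g, Nat.succ_sub_succ]

lemma sum_g (m : ℕ) : 2 * ∑ i, g m i = 3^(m+1) - 3 := by
  induction m with
  | zero => simp
  | succ m ih =>
    rw [g_succ, Fin.sum_cons]
    have : (3:ℤ)^(m+2) = 3 * 3^(m+1) := by ring
    rw [this]
    linarith

lemma F_g (m : ℕ) : F (g m) = 3^(m+1) - 3 := by
  induction m with
  | zero => simp [F]
  | succ m ih =>
    rw [g_succ, F_cons, ih]
    have h := sum_g m
    have : (3:ℤ)^(m+2) = 3 * 3^(m+1) := by ring
    rw [this]
    linear_combination (-(3:ℤ)^(m+1)) * h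

lemma aux (m : ℕ) : {x : Fin (m+2) → ℤ | (∀ i, 0 < x i) ∧ F x = 0}.Infinite := by
  set M : ℤ := 3^(m+1) - 2 with hMdef
  have hM1 : 1 ≤ M := by
    have : (3:ℤ)^1 ≤ 3^(m+1) := pow_le_pow_right₀ (by norm_num) (by omega)
    simp at this; omega
  have hS : 2 * ∑ i, g m i = M - 1 := by rw [sum_g]; omega
  have hFg : F (g m) = M - 1 := by rw [F_g]; omega
  apply Set.infinite_of_injective_forall_mem
    (f := fun k : ℕ =>
      Fin.cons (2*M*((k:ℤ)+1)^2 + M*((k:ℤ)+1) + 2*((k:ℤ)+1) + 1)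
        (Fin.cons (2*M*((k:ℤ)+1)^2 - M*((k:ℤ)+1) + 2*((k:ℤ)+1)) (g m)))
  case hi =>
    intro k k' h
    have h0 := congrFun h 0
    simp only [Fin.cons_zero] at h0
    have hfac : ((k:ℤ) - k') * (2*M*((k:ℤ)+k'+2) + M + 2) = 0 := by linear_combination h0
    have hkk : (0:ℤ) ≤ (k:ℤ) + k' := by positivity
    have hpos : 0 < 2*M*((k:ℤ)+k'+2) + M + 2 := by nlinarith [mul_nonneg (by linarith : (0:ℤ) ≤ M) hkk]
    have : (k : ℤ) = k' := by
      rcases mul_eq_zero.mp hfac with h1 | h2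
      · linarith
      · linarith
    exact_mod_cast this
  case hf =>
    intro k
    set K : ℤ := (k:ℤ) + 1 with hK
    have hK1 : 1 ≤ K := by have := Nat.cast_nonneg (α := ℤ) k; omega
    constructor
    · intro i
      have hMpos : (0:ℤ) < M := by linarith
      have hKpos : (0:ℤ) < K := by linarith
      refine Fin.cases ?_ (fun j => ?_) i
      · simp only [Fin.cons_zero]
        nlinarith [mul_pos hMpos hKpos, mul_pos (mul_pos hMpos hKpos) hKpos]
      · refine Fin.cases ?_ (fun j' => ?_) j
        · simp only [Fin.cons_succ, Fin.cons_zero]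
          nlinarith [mul_pos hMpos hKpos, mul_pos (mul_pos hMpos hKpos) hKpos]
        · simp only [Fin.cons_succ]
          unfold g
          positivity
    · rw [F_cons, F_cons, hFg, Fin.sum_cons]
      set S : ℤ := ∑ i, g m i
      linear_combination (-(4*M*K^2 + 4*K + 1)) * hS


/-- There are infinitely many faithful `n`-color fair games. -/
theorem stmt_2 (n : ℕ) (hn : 2 ≤ n) :
    {x : Fin n → ℤ | (∀ i, 0 < x i) ∧ F x = 0}.Infinite := by
  obtain ⟨m, rfl⟩ : ∃ m, n = m + 2 := ⟨n - 2, by omega⟩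
  exact aux m
end

section
/- Fix n ≥ 3. Let a = (a_1,…,a_{n−3}) ∈ ℤ^{n−3}, let S = Σ a_i and N = Σ a_i^2, let m ≥ 0, and let 0 ≤ b ≤ c be integers with (2b+1)(2c+1) = m^2 + m + 1 + 2(S^2 + S + N). Then each of the following n-tuples satisfies F_n = 0: (b−S, c−S, b+c+1−S+m, a), (b−S, c−S, b+c−S−m, a), (−(c+1)−S, −(b+1)−S, −(b+c+S+1)+m, a), and (−(c+1)−S, −(b+1)−S, −(b+c+S+2)−m, a). -/
open Finset

lemma sq_sum_eq {n : ℕ} (x : Fin n → ℤ) :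
    (∑ i, x i) ^ 2 =
      ∑ i, x i ^ 2 + 2 * ∑ i, ∑ j, if i < j then x i * x j else 0 := by
  have key : ∀ i j : Fin n, x i * x j =
      (if i < j then x i * x j else 0) + (if i = j then x i * x j else 0)
        + (if j < i then x i * x j else 0) := by
    intro i j
    rcases lt_trichotomy i j with h | h | h
    · simp [h, h.ne, h.not_gt]
    · simp [h]
    · simp [h, h.ne', h.not_gt]
  have h1 : (∑ i, x i) ^ 2 = ∑ i, ∑ j, x i * x j := by
    rw [sq, Finset.sum_mul_sum]
  rw [h1]
  have h2 : ∑ i : Fin n, ∑ j : Fin n, x i * x j =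
      (∑ i : Fin n, ∑ j : Fin n, if i < j then x i * x j else 0)
      + (∑ i : Fin n, ∑ j : Fin n, if i = j then x i * x j else 0)
      + (∑ i : Fin n, ∑ j : Fin n, if j < i then x i * x j else 0) := by
    rw [← Finset.sum_add_distrib, ← Finset.sum_add_distrib]
    refine Finset.sum_congr rfl fun i _ => ?_
    rw [← Finset.sum_add_distrib, ← Finset.sum_add_distrib]
    exact Finset.sum_congr rfl fun j _ => key i j
  rw [h2]
  have hdiag : (∑ i : Fin n, ∑ j : Fin n, if i = j then x i * x j else 0)
      = ∑ i, x i ^ 2 := by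
    refine Finset.sum_congr rfl fun i _ => ?_
    simp [Finset.sum_ite_eq, sq]
  have hswap : (∑ i : Fin n, ∑ j : Fin n, if j < i then x i * x j else 0)
      = ∑ i : Fin n, ∑ j : Fin n, if i < j then x i * x j else 0 := by
    rw [Finset.sum_comm]
    refine Finset.sum_congr rfl fun i _ => Finset.sum_congr rfl fun j _ => ?_
    rcases lt_or_ge i j with h | h
    · simp [h, mul_comm]
    · simp [h.not_gt]
  rw [hdiag, hswap]; ring

lemma F_eq {n : ℕ} (x : Fin n → ℤ) :
    F x = 2 * ∑ i, x i ^ 2 - (∑ i, x i) ^ 2 - ∑ i, x i := by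
  have := sq_sum_eq x
  unfold F
  linarith

lemma F_append (d : ℕ) (u v w : ℤ) (a : Fin d → ℤ) :
    F (Fin.append ![u, v, w] a) =
      2 * (u ^ 2 + v ^ 2 + w ^ 2 + ∑ i, a i ^ 2)
        - (u + v + w + ∑ i, a i) ^ 2 - (u + v + w + ∑ i, a i) := by
  rw [F_eq]
  have hs : ∑ i, Fin.append ![u, v, w] a i = u + v + w + ∑ i, a i := by
    rw [Fin.sum_univ_add]
    simp [Fin.sum_univ_three]
  have hsq : ∑ i, (Fin.append ![u, v, w] a i) ^ 2
      = u ^ 2 + v ^ 2 + w ^ 2 + ∑ i, a i ^ 2 := by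
    rw [Fin.sum_univ_add]
    simp [Fin.sum_univ_three]
  rw [hs, hsq]

/-- The parametric solutions of the fair-game equation `F_n = 0` (`n = 3 + d ≥ 3`):
for `a ∈ ℤ^{n-3}`, `m ≥ 0` and `0 ≤ b ≤ c` with
`(2b+1)(2c+1) = m² + m + 1 + 2(S² + S + N)` (`S = Σaᵢ`, `N = Σaᵢ²`), the four
displayed `n`-tuples are solutions. -/
theorem stmt_3 (d : ℕ) (a : Fin d → ℤ) (m : ℤ) (hm : 0 ≤ m) (b c : ℤ)
    (hb : 0 ≤ b) (hbc : b ≤ c)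
    (hfac : (2 * b + 1) * (2 * c + 1) =
      m ^ 2 + m + 1 + 2 * ((∑ i, a i) ^ 2 + (∑ i, a i) + ∑ i, (a i) ^ 2)) :
    F (Fin.append ![b - ∑ i, a i, c - ∑ i, a i, b + c + 1 - (∑ i, a i) + m] a) = 0 ∧
    F (Fin.append ![b - ∑ i, a i, c - ∑ i, a i, b + c - (∑ i, a i) - m] a) = 0 ∧
    F (Fin.append ![-(c + 1) - ∑ i, a i, -(b + 1) - ∑ i, a i,
        -(b + c + (∑ i, a i) + 1) + m] a) = 0 ∧
    F (Fin.append ![-(c + 1) - ∑ i, a i, -(b + 1) - ∑ i, a i,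
        -(b + c + (∑ i, a i) + 2) - m] a) = 0 := by
  refine ⟨?_, ?_, ?_, ?_⟩ <;> rw [F_append] <;> linear_combination -hfac
end

section
/- Let n ≥ 3 and let a ∈ ℤ^n satisfy F_n(a) = 0. Then for any two pairs of distinct indices {i,j} and {i',j'}, the integers 2·s_{ij}(a) + 1 and 2·s_{i'j'}(a) + 1 have the same sign, where s_{ij}(a) = Σ_{l ≠ i,j} a_l. In particular, for n = 3, the coordinates of any integer solution of F_3 = 0 are either all non-negative or all negative. -/
open Finset

lemma sq_sum_aux {n : ℕ} (x : Fin n → ℤ) :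
    (∑ i, x i) ^ 2 = ∑ i, (x i) ^ 2 + 2 * ∑ i, ∑ j, if i < j then x i * x j else 0 := by
  have h0 : (∑ i, x i) ^ 2 = ∑ i, ∑ j, x i * x j := by
    rw [sq, Finset.sum_mul_sum]
  have hsplit : ∀ i j : Fin n, x i * x j =
      (if i < j then x i * x j else 0) + (if j < i then x i * x j else 0)
      + (if i = j then x i * x j else 0) := by
    intro i j
    rcases lt_trichotomy i j with h | h | h
    · simp [h, h.ne, not_lt_of_gt h]
    · simp [h, lt_irrefl]
    · simp [h, h.ne', not_lt_of_gt h]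
  have hswap : (∑ i, ∑ j, if j < i then x i * x j else 0)
      = ∑ i, ∑ j, if i < j then x i * x j else 0 := by
    rw [Finset.sum_comm]
    apply Finset.sum_congr rfl
    intro i _
    apply Finset.sum_congr rfl
    intro j _
    by_cases h : i < j <;> simp [h, mul_comm]
  have hdiag : (∑ i, ∑ j : Fin n, if i = j then x i * x j else 0) = ∑ i, (x i) ^ 2 := by
    apply Finset.sum_congr rfl
    intro i _
    rw [Finset.sum_ite_eq]
    simp [sq]
  calc (∑ i, x i) ^ 2 = ∑ i, ∑ j, x i * x j := h0
    _ = ∑ i, ∑ j, ((if i < j then x i * x j else 0) + (if j < i then x i * x j else 0)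
        + (if i = j then x i * x j else 0)) := by
        apply Finset.sum_congr rfl; intro i _; apply Finset.sum_congr rfl; intro j _
        exact hsplit i j
    _ = (∑ i, ∑ j, if i < j then x i * x j else 0)
        + (∑ i, ∑ j, if j < i then x i * x j else 0)
        + (∑ i, ∑ j : Fin n, if i = j then x i * x j else 0) := by
        simp [Finset.sum_add_distrib]
    _ = ∑ i, (x i) ^ 2 + 2 * ∑ i, ∑ j, if i < j then x i * x j else 0 := by
        rw [hswap, hdiag]; ring

lemma key {n : ℕ} (a : Fin n → ℤ) (hF : F a = 0) {i j : Fin n} (hij : i ≠ j) :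
    0 < (2 * (∑ l, a l) + 1) * (2 * (∑ l ∈ univ \ {i, j}, a l) + 1) := by
  have hQ : 2 * (∑ l, (a l) ^ 2) = (∑ l, a l) ^ 2 + (∑ l, a l) := by
    have h := sq_sum_aux a
    unfold F at hF
    linarith
  have ht : (∑ l ∈ univ \ {i, j}, a l) = (∑ l, a l) - (a i + a j) := by
    rw [Finset.sum_sdiff_eq_sub (Finset.subset_univ _), Finset.sum_pair hij]
  have hle : a i ^ 2 + a j ^ 2 ≤ ∑ l, (a l) ^ 2 := by
    have h := Finset.sum_le_sum_of_subset_of_nonneg (Finset.subset_univ ({i, j} : Finset (Fin n)))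
      (fun k _ _ => sq_nonneg (a k))
    rwa [Finset.sum_pair hij] at h
  set s := ∑ l, a l
  rw [ht]
  nlinarith [sq_nonneg (a i - a j), sq_nonneg (2 * (s - (a i + a j)) + 1)]

/-- For a solution `a` of `F_n = 0` (`n ≥ 3`), all the numbers `2·s_{ij}(a) + 1`
(sum over coordinates omitting `i` and `j`) have the same sign; in particular the
coordinates of a solution of `F_3 = 0` are either all non-negative or all negative. -/
theorem stmt_4 :
    (∀ n : ℕ, 3 ≤ n → ∀ a : Fin n → ℤ, F a = 0 →
      ∀ i j i' j' : Fin n, i ≠ j → i' ≠ j' →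
        (0 < 2 * (∑ l ∈ univ \ {i, j}, a l) + 1 ↔
         0 < 2 * (∑ l ∈ univ \ {i', j'}, a l) + 1)) ∧
    (∀ x : Fin 3 → ℤ, F x = 0 → (∀ i, 0 ≤ x i) ∨ (∀ i, x i < 0)) := by
  constructor
  · intro n _ a hF i j i' j' hij hij'
    have h1 := key a hF hij
    have h2 := key a hF hij'
    rcases mul_pos_iff.mp h1 with ⟨hA, hB⟩ | ⟨hA, hB⟩ <;>
      rcases mul_pos_iff.mp h2 with ⟨hA', hB'⟩ | ⟨hA', hB'⟩ <;> constructor <;> intro h <;> omega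
  · intro x hF
    have e0 : (univ \ {(1 : Fin 3), 2} : Finset (Fin 3)) = {0} := by decide
    have e1 : (univ \ {(0 : Fin 3), 2} : Finset (Fin 3)) = {1} := by decide
    have e2 : (univ \ {(0 : Fin 3), 1} : Finset (Fin 3)) = {2} := by decide
    have h0 := key x hF (show (1 : Fin 3) ≠ 2 by decide)
    have h1 := key x hF (show (0 : Fin 3) ≠ 2 by decide)
    have h2 := key x hF (show (0 : Fin 3) ≠ 1 by decide)
    rw [e0, Finset.sum_singleton] at h0
    rw [e1, Finset.sum_singleton] at h1
    rw [e2, Finset.sum_singleton] at h2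
    by_cases hA : 0 < 2 * (∑ l, x l) + 1
    · left
      have k0 : 0 ≤ x 0 := by rcases mul_pos_iff.mp h0 with ⟨_, hB⟩ | ⟨hA', _⟩ <;> omega
      have k1 : 0 ≤ x 1 := by rcases mul_pos_iff.mp h1 with ⟨_, hB⟩ | ⟨hA', _⟩ <;> omega
      have k2 : 0 ≤ x 2 := by rcases mul_pos_iff.mp h2 with ⟨_, hB⟩ | ⟨hA', _⟩ <;> omega
      intro i
      fin_cases i
      · exact k0
      · exact k1
      · exact k2
    · right
      have k0 : x 0 < 0 := by rcases mul_pos_iff.mp h0 with ⟨hA', _⟩ | ⟨_, hB⟩ <;> omega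
      have k1 : x 1 < 0 := by rcases mul_pos_iff.mp h1 with ⟨hA', _⟩ | ⟨_, hB⟩ <;> omega
      have k2 : x 2 < 0 := by rcases mul_pos_iff.mp h2 with ⟨hA', _⟩ | ⟨_, hB⟩ <;> omega
      intro i
      fin_cases i
      · exact k0
      · exact k1
      · exact k2
end

section
/- Consider solutions of F_3 = 0 in ℤ^3. (1) Every solution x with 1 + x_1 + x_2 + x_3 > 0 has all coordinates non-negative, i.e., is a 3-color fair game, and every solution with 1 + x_1 + x_2 + x_3 < 0 has all coordinates negative. (2) Every 3-color fair game is connected to (0,0,0) by the reflexive-transitive closure of the relation in which y is related to x when y is a permutation of a neighbor of x; likewise every solution with all coordinates negative is connected to (−1,−1,−1). Hence S_3 has exactly two connected components: the fair games and the negative solutions. -/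
open Finset

def nbr {n : ℕ} (a : Fin n → ℤ) (k : Fin n) : Fin n → ℤ :=
  Function.update a k (2 * (∑ i ∈ univ.erase k, a i) + 1 - a k)

/-- `step x y` holds when `x` is a solution of `F_3 = 0` and `y` is a permutation of
one of its neighbors. -/
def step (x y : Fin 3 → ℤ) : Prop :=
  F x = 0 ∧ ∃ (k : Fin 3) (σ : Equiv.Perm (Fin 3)), y = nbr x k ∘ σ

/-! ### Auxiliary lemmas -/

lemma F_expand (x : Fin 3 → ℤ) :
    F x = (x 0 + x 1 + x 2)^2 - (x 0 + x 1 + x 2) - 4*(x 0 * x 1 + x 0 * x 2 + x 1 * x 2) := by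
  simp [F, Fin.sum_univ_three]

lemma sum_erase_eq {n : ℕ} (x : Fin n → ℤ) (k : Fin n) :
    ∑ i ∈ univ.erase k, x i = (∑ i, x i) - x k := by
  have := Finset.sum_erase_add univ x (mem_univ k); linarith

lemma nbr_apply_self {n : ℕ} (x : Fin n → ℤ) (k : Fin n) :
    nbr x k k = 2 * (∑ i, x i) + 1 - 3 * x k := by
  simp [nbr, sum_erase_eq]; ring

lemma nbr_apply_ne {n : ℕ} (x : Fin n → ℤ) (k i : Fin n) (h : i ≠ k) : nbr x k i = x i := by
  simp [nbr, Function.update_of_ne h]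

lemma sum_nbr {n : ℕ} (x : Fin n → ℤ) (k : Fin n) :
    ∑ i, nbr x k i = 3 * (∑ i, x i) + 1 - 4 * x k := by
  unfold nbr
  rw [Finset.sum_update_of_mem (mem_univ k), ← Finset.erase_eq, sum_erase_eq]
  ring

lemma F_alt (x : Fin 3 → ℤ) :
    F x = 2 * (∑ i, x i ^ 2) - (∑ i, x i)^2 - (∑ i, x i) := by
  rw [F_expand]; simp [Fin.sum_univ_three]; ring

lemma sq_sum_nbr (x : Fin 3 → ℤ) (k : Fin 3) :
    ∑ i, (nbr x k i) ^ 2 = (∑ i, x i ^ 2) - x k ^ 2 + (2 * (∑ i, x i) + 1 - 3 * x k)^2 := by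
  rw [← Finset.sum_erase_add univ _ (mem_univ k),
    ← Finset.sum_erase_add univ (fun i => x i ^ 2) (mem_univ k), nbr_apply_self]
  have : ∑ i ∈ univ.erase k, (nbr x k i)^2 = ∑ i ∈ univ.erase k, x i ^ 2 := by
    refine Finset.sum_congr rfl fun i hi => ?_
    rw [nbr_apply_ne x k i (Finset.ne_of_mem_erase hi)]
  rw [this]; ring

lemma F_nbr (x : Fin 3 → ℤ) (k : Fin 3) : F (nbr x k) = F x := by
  rw [F_alt, F_alt, sq_sum_nbr, sum_nbr]; ring

lemma nbr_nbr {n : ℕ} (x : Fin n → ℤ) (k : Fin n) : nbr (nbr x k) k = x := by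
  funext i
  by_cases h : i = k
  · subst h; rw [nbr_apply_self, sum_nbr, nbr_apply_self]; ring
  · rw [nbr_apply_ne _ _ _ h, nbr_apply_ne _ _ _ h]

lemma nbr_perm {n : ℕ} (x : Fin n → ℤ) (σ : Equiv.Perm (Fin n)) (k : Fin n) :
    nbr (x ∘ σ) k = nbr x (σ k) ∘ σ := by
  funext i
  by_cases h : i = k
  · subst h
    show nbr (x ∘ σ) i i = nbr x (σ i) (σ i)
    rw [nbr_apply_self, nbr_apply_self]
    have h1 : ∑ j, (x ∘ σ) j = ∑ j, x j := Equiv.sum_comp σ x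
    rw [h1]; rfl
  · have h2 : σ i ≠ σ k := fun hc => h (σ.injective hc)
    show nbr (x ∘ σ) k i = nbr x (σ k) (σ i)
    rw [nbr_apply_ne _ _ _ h, nbr_apply_ne _ _ _ h2]; rfl

lemma F_perm (x : Fin 3 → ℤ) (σ : Equiv.Perm (Fin 3)) : F (x ∘ σ) = F x := by
  rw [F_alt, F_alt]
  have h1 : ∑ j, (x ∘ σ) j = ∑ j, x j := Equiv.sum_comp σ x
  have h2 : ∑ j, ((x ∘ σ) j) ^ 2 = ∑ j, (x j) ^ 2 := Equiv.sum_comp σ (fun j => x j ^ 2)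
  rw [h1, h2]

lemma step_symm : Symmetric step := by
  intro x y ⟨hF, k, σ, hy⟩
  have hFy : F y = 0 := by rw [hy, F_perm, F_nbr, hF]
  refine ⟨hFy, σ⁻¹ k, σ⁻¹, ?_⟩
  have h : nbr y (σ⁻¹ k) = nbr (nbr x k ∘ σ) (σ⁻¹ k) := by rw [hy]
  rw [h, nbr_perm (nbr x k) σ (σ⁻¹ k), (by exact σ.apply_symm_apply k : σ (σ⁻¹ k) = k), nbr_nbr]
  funext i; simp

/-! ### Inequality lemmas -/

lemma key1 (a b c : ℤ) (hs : 0 < 1 + (a + b + c))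
    (hF : (a + b + c)^2 - (a + b + c) - 4*(a*b + a*c + b*c) = 0) : 0 ≤ a := by
  by_contra h
  push_neg at h
  have h1 : a ≤ -1 := by linarith
  have h2 : 1 ≤ b + c := by linarith
  nlinarith [sq_nonneg (b - c), mul_nonneg (by linarith : (0:ℤ) ≤ -1 - a)
    (by linarith : (0:ℤ) ≤ b + c - 1)]

lemma key2 (a b c : ℤ) (ha : 0 ≤ a) (hb : 0 ≤ b) (hc : 0 ≤ c)
    (hF : (a + b + c)^2 - (a + b + c) - 4*(a*b + a*c + b*c) = 0) :
    4 * c ≤ 3 * (a + b + c) + 1 := by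
  by_contra h
  push_neg at h
  have h1 : 3*(a+b) + 2 ≤ c := by linarith
  nlinarith [sq_nonneg (a - b), mul_nonneg (mul_nonneg ha hb) hc, mul_nonneg ha hb,
    mul_nonneg ha hc, mul_nonneg hb hc]

lemma key3 (a b c : ℤ) (ha : 0 ≤ a) (hb : 0 ≤ b) (hac : a ≤ c) (hbc : b ≤ c) (hc : 1 ≤ c)
    (hF : (a + b + c)^2 - (a + b + c) - 4*(a*b + a*c + b*c) = 0) :
    a + b + 1 ≤ c := by
  by_contra h
  push_neg at h
  have h1 : c ≤ a + b := by linarith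
  nlinarith [mul_nonneg (by linarith : (0:ℤ) ≤ c - (a-b)) (by linarith : (0:ℤ) ≤ c + (a-b)),
    mul_nonneg (by linarith : (0:ℤ) ≤ c) (by linarith : (0:ℤ) ≤ a + b - c), sq_nonneg (a-b)]

lemma no_neg2 (a b c : ℤ) (hs : a + b + c = -2)
    (hF : (a + b + c)^2 - (a + b + c) - 4*(a*b + a*c + b*c) = 0) : False := by
  have h : 2 * (a*b + a*c + b*c) = 3 := by nlinarith
  omega

/-! ### Part 1 -/

lemma part1pos (x : Fin 3 → ℤ) (hF : F x = 0) (hs : 0 < 1 + ∑ i, x i) : ∀ i, 0 ≤ x i := by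
  rw [F_expand] at hF
  rw [Fin.sum_univ_three] at hs
  intro i
  fin_cases i
  · exact key1 _ _ _ hs hF
  · exact key1 (x 1) (x 0) (x 2) (by linarith) (by linarith)
  · exact key1 (x 2) (x 0) (x 1) (by linarith) (by linarith)

def iota (x : Fin 3 → ℤ) : Fin 3 → ℤ := fun i => -1 - x i

lemma F_iota (x : Fin 3 → ℤ) : F (iota x) = F x := by
  rw [F_expand, F_expand]; simp only [iota]; ring

lemma sum_iota (x : Fin 3 → ℤ) : ∑ i, iota x i = -3 - ∑ i, x i := by
  simp only [iota, Fin.sum_univ_three]; ring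

lemma nbr_iota (x : Fin 3 → ℤ) (k : Fin 3) : nbr (iota x) k = iota (nbr x k) := by
  funext i
  by_cases h : i = k
  · subst h
    rw [nbr_apply_self, sum_iota]
    show _ = -1 - nbr x i i
    rw [nbr_apply_self]
    simp only [iota]; ring
  · rw [nbr_apply_ne _ _ _ h]
    show iota x i = iota (nbr x k) i
    unfold iota
    rw [nbr_apply_ne _ _ _ h]

lemma part1neg (x : Fin 3 → ℤ) (hF : F x = 0) (hs : 1 + ∑ i, x i < 0) : ∀ i, x i < 0 := by
  have hs3 : ∑ i, x i ≤ -3 := by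
    by_contra h
    push_neg at h
    have h2 : ∑ i, x i = -2 := by omega
    rw [F_expand] at hF
    rw [Fin.sum_univ_three] at h2
    exact no_neg2 _ _ _ h2 hF
  have h1 : ∀ i, 0 ≤ iota x i := by
    apply part1pos _ (by rw [F_iota, hF])
    rw [sum_iota]; linarith
  intro i
  have := h1 i
  unfold iota at this
  linarith

/-! ### Part 2 : descent -/

lemma nbr_nonneg (x : Fin 3 → ℤ) (hF : F x = 0) (hx : ∀ i, 0 ≤ x i) (k : Fin 3) :
    ∀ i, 0 ≤ nbr x k i := by
  have hF' := hF
  rw [F_expand] at hF'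
  apply part1pos _ (by rw [F_nbr]; exact hF)
  rw [sum_nbr]
  have h2 : 4 * x k ≤ 3 * (∑ i, x i) + 1 := by
    rw [Fin.sum_univ_three]
    fin_cases k
    · have := key2 (x 1) (x 2) (x 0) (hx 1) (hx 2) (hx 0) (by linear_combination hF')
      simpa using by linarith
    · have := key2 (x 0) (x 2) (x 1) (hx 0) (hx 2) (hx 1) (by linear_combination hF')
      simpa using by linarith
    · have := key2 (x 0) (x 1) (x 2) (hx 0) (hx 1) (hx 2) (by linear_combination hF')
      simpa using by linarith
  linarith

lemma reach : ∀ n : ℕ, ∀ x : Fin 3 → ℤ, F x = 0 → (∀ i, 0 ≤ x i) → (∑ i, x i ≤ (n : ℤ)) →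
    Relation.ReflTransGen step x (fun _ => 0) := by
  intro n
  induction n with
  | zero =>
    intro x hF hx hs
    have hx0 : x = fun _ => 0 := by
      rw [Fin.sum_univ_three] at hs
      have h0 := hx 0; have h1 := hx 1; have h2 := hx 2
      funext i; fin_cases i <;> simp <;> omega
    rw [hx0]
  | succ n ih =>
    intro x hF hx hs
    by_cases hz : ∀ i, x i = 0
    · have hx0 : x = fun _ => 0 := funext hz
      rw [hx0]
    · push_neg at hz
      obtain ⟨j, hj⟩ := hz
      have hj1 : 1 ≤ x j := by have := hx j; omega
      obtain ⟨k, hk⟩ : ∃ k : Fin 3, ∀ i, x i ≤ x k := by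
        rcases le_total (x 0) (x 1) with h01 | h01 <;>
          rcases le_total (x 1) (x 2) with h12 | h12 <;>
          rcases le_total (x 0) (x 2) with h02 | h02
        exacts [⟨2, fun i => by fin_cases i <;> first | exact le_refl _ | exact h01 | exact h12 | exact h02 | exact le_trans h01 h12 | exact le_trans h12 h01⟩,
          ⟨2, fun i => by fin_cases i <;> first | exact le_refl _ | exact h01 | exact h12 | exact h02 | exact le_trans h01 h12 | exact le_trans h12 h01⟩,
          ⟨1, fun i => by fin_cases i <;> first | exact le_refl _ | exact h01 | exact h12 | exact h02 | exact le_trans h01 h12 | exact le_trans h12 h01⟩,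
          ⟨1, fun i => by fin_cases i <;> first | exact le_refl _ | exact h01 | exact h12 | exact h02 | exact le_trans h01 h12 | exact le_trans h12 h01⟩,
          ⟨2, fun i => by fin_cases i <;> first | exact le_refl _ | exact h01 | exact h12 | exact h02 | exact le_trans h01 h12 | exact le_trans h12 h01⟩,
          ⟨0, fun i => by fin_cases i <;> first | exact le_refl _ | exact h01 | exact h12 | exact h02 | exact le_trans h01 h12 | exact le_trans h12 h01⟩,
          ⟨0, fun i => by fin_cases i <;> first | exact le_refl _ | exact h01 | exact h12 | exact h02 | exact le_trans h01 h12 | exact le_trans h12 h01⟩,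
          ⟨0, fun i => by fin_cases i <;> first | exact le_refl _ | exact h01 | exact h12 | exact h02 | exact le_trans h01 h12 | exact le_trans h12 h01⟩]
      have hck : 1 ≤ x k := le_trans hj1 (hk j)
      have hF' := hF
      rw [F_expand] at hF'
      -- two key inequalities
      have hkey : (∑ i, x i) + 1 ≤ 2 * x k := by
        rw [Fin.sum_univ_three]
        fin_cases k
        · show x 0 + x 1 + x 2 + 1 ≤ 2 * x 0
          have h := key3 (x 1) (x 2) (x 0) (hx 1) (hx 2) (hk 1) (hk 2) hck
            (by linear_combination hF')
          linarith
        · show x 0 + x 1 + x 2 + 1 ≤ 2 * x 1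
          have h := key3 (x 0) (x 2) (x 1) (hx 0) (hx 2) (hk 0) (hk 2) hck
            (by linear_combination hF')
          linarith
        · show x 0 + x 1 + x 2 + 1 ≤ 2 * x 2
          have h := key3 (x 0) (x 1) (x 2) (hx 0) (hx 1) (hk 0) (hk 1) hck
            (by linear_combination hF')
          linarith
      set y := nbr x k with hy
      have hFy : F y = 0 := by rw [hy, F_nbr]; exact hF
      have hynn : ∀ i, 0 ≤ y i := nbr_nonneg x hF hx k
      have hsy : ∑ i, y i = 3 * (∑ i, x i) + 1 - 4 * x k := sum_nbr x k
      have hsy' : ∑ i, y i ≤ (n : ℤ) := by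
        have : (∑ i, x i) ≤ (n : ℤ) + 1 := by push_cast at hs ⊢; linarith
        rw [hsy]; linarith
      have hstep : step x y := ⟨hF, k, Equiv.refl _, by funext i; simp [hy]⟩
      exact Relation.ReflTransGen.head hstep (ih y hFy hynn hsy')

/-! ### Invariant for non-connectivity -/

lemma reach_nonneg (y : Fin 3 → ℤ)
    (h : Relation.ReflTransGen step (fun _ => 0) y) : ∀ i, 0 ≤ y i := by
  induction h with
  | refl => intro i; norm_num
  | tail h1 h2 ih =>
    obtain ⟨hFb, k, σ, hc⟩ := h2
    intro i
    rw [hc]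
    exact nbr_nonneg _ hFb ih k (σ i)

lemma step_iota (a b : Fin 3 → ℤ) (h : step a b) : step (iota a) (iota b) := by
  obtain ⟨hF, k, σ, hb⟩ := h
  refine ⟨by rw [F_iota]; exact hF, k, σ, ?_⟩
  funext i
  show iota b i = nbr (iota a) k (σ i)
  rw [nbr_iota]
  show iota b i = iota (nbr a k) (σ i)
  unfold iota
  rw [hb]
  rfl

/-! ### Main theorem -/

/-- (1) Solutions of `F_3 = 0` with `1 + s > 0` are exactly the 3-color fair games and
those with `1 + s < 0` have all coordinates negative. (2) Every fair game is connected
to `(0,0,0)` and every all-negative solution to `(−1,−1,−1)`, while the two base points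
are not connected: `S_3` has exactly two components. -/
theorem stmt_9 :
    (∀ x : Fin 3 → ℤ, F x = 0 →
      (0 < 1 + ∑ i, x i → ∀ i, 0 ≤ x i) ∧ (1 + ∑ i, x i < 0 → ∀ i, x i < 0)) ∧
    (∀ x : Fin 3 → ℤ, F x = 0 → (∀ i, 0 ≤ x i) →
      Relation.ReflTransGen step (fun _ => 0) x) ∧
    (∀ x : Fin 3 → ℤ, F x = 0 → (∀ i, x i < 0) →
      Relation.ReflTransGen step (fun _ => -1) x) ∧
    ¬ Relation.ReflTransGen step (fun _ => 0) (fun _ => -1) := by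
  have main2 : ∀ x : Fin 3 → ℤ, F x = 0 → (∀ i, 0 ≤ x i) →
      Relation.ReflTransGen step (fun _ => 0) x := by
    intro x hF hx
    exact (@Relation.ReflTransGen.stdSymm _ step ⟨step_symm⟩).symm _ _
      (reach (∑ i, x i).toNat x hF hx (Int.self_le_toNat _))
  refine ⟨fun x hF => ⟨part1pos x hF, part1neg x hF⟩, main2, ?_, ?_⟩
  · intro x hF hx
    have hιnn : ∀ i, 0 ≤ iota x i := by
      intro i; unfold iota; have := hx i; linarith
    have h1 : Relation.ReflTransGen step (fun _ => 0) (iota x) :=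
      main2 (iota x) (by rw [F_iota]; exact hF) hιnn
    have h2 : Relation.ReflTransGen step (iota (fun _ => 0)) (iota (iota x)) :=
      Relation.ReflTransGen.lift iota step_iota _ _ h1
    have e1 : iota (fun _ => 0) = (fun _ => (-1 : ℤ)) := by funext i; simp [iota]
    have e2 : iota (iota x) = x := by funext i; simp [iota]
    rwa [e1, e2] at h2
  · intro h
    have := reach_nonneg _ h 0
    norm_num at this
end

section
/- Let c ≥ 0 be an integer and suppose u, v ∈ ℤ satisfy u^2 − (2c+1)v + c(c−1) = 0. Then v = (u^2 + c(c−1))/(2c+1) and |u| ≤ v. -/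
/-- If `c ≥ 0` and `u² − (2c+1)v + c(c−1) = 0`, then `v = (u² + c(c−1))/(2c+1)` and
`|u| ≤ v`. -/
theorem stmt_11 (c u v : ℤ) (hc : 0 ≤ c)
    (h : u ^ 2 - (2 * c + 1) * v + c * (c - 1) = 0) :
    v = (u ^ 2 + c * (c - 1)) / (2 * c + 1) ∧ |u| ≤ v := by
  have hne : (2 * c + 1) ≠ 0 := by omega
  have heq : u ^ 2 + c * (c - 1) = (2 * c + 1) * v := by linarith
  constructor
  · rw [heq, Int.mul_ediv_cancel_left _ hne]
  · have habs : |u| ^ 2 = u ^ 2 := sq_abs u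
    have key : (2 * c + 1) * (v - |u| + 1) = (|u| - c) * (|u| - c - 1) + 1 := by
      nlinarith [habs, h]
    have hm : 0 ≤ (|u| - c) * (|u| - c - 1) := by
      rcases le_or_gt (|u| - c) 0 with hx | hx
      · nlinarith
      · nlinarith
    have hpos : 0 < (2 * c + 1) * (v - |u| + 1) := by omega
    have : 0 < v - |u| + 1 := by
      by_contra hcon
      push_neg at hcon
      nlinarith
    omega
end

section
/- Let c ≥ 0 be an integer. If u ∈ ℤ satisfies (2c+1) ∣ (u^2 + c(c−1)), then x_1 = (u^2 + (2c+1)u + c(c−1))/(2(2c+1)) and x_2 = (u^2 − (2c+1)u + c(c−1))/(2(2c+1)) are non-negative integers and (x_1, x_2, c) is a 3-color fair game. Conversely, every 3-color fair game arises this way: if (x_1, x_2, c) is a 3-color fair game, then u = x_1 − x_2 satisfies (2c+1) ∣ (u^2 + c(c−1)) and x_1, x_2 are given by the displayed formulas. -/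
/-- `F_3` evaluated on a triple. -/
def F3 (x y z : ℤ) : ℤ :=
  (x + y + z) ^ 2 - (x + y + z) - 4 * (x * y + y * z + z * x)

/-- Parametrization of the 3-color fair games with third coordinate `c`: for
`u² ≡ −c(c−1) (mod 2c+1)`, the numbers `x₁ = (u² + (2c+1)u + c(c−1))/(2(2c+1))` and
`x₂ = (u² − (2c+1)u + c(c−1))/(2(2c+1))` are non-negative integers and `(x₁, x₂, c)`
is a 3-color fair game; conversely every 3-color fair game `(x₁, x₂, c)` arises this
way with `u = x₁ − x₂`. -/
theorem stmt_12 (c : ℤ) (hc : 0 ≤ c) :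
    (∀ u : ℤ, (2 * c + 1) ∣ (u ^ 2 + c * (c - 1)) →
      (2 * (2 * c + 1)) ∣ (u ^ 2 + (2 * c + 1) * u + c * (c - 1)) ∧
      (2 * (2 * c + 1)) ∣ (u ^ 2 - (2 * c + 1) * u + c * (c - 1)) ∧
      0 ≤ (u ^ 2 + (2 * c + 1) * u + c * (c - 1)) / (2 * (2 * c + 1)) ∧
      0 ≤ (u ^ 2 - (2 * c + 1) * u + c * (c - 1)) / (2 * (2 * c + 1)) ∧
      F3 ((u ^ 2 + (2 * c + 1) * u + c * (c - 1)) / (2 * (2 * c + 1)))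
         ((u ^ 2 - (2 * c + 1) * u + c * (c - 1)) / (2 * (2 * c + 1))) c = 0) ∧
    (∀ x1 x2 : ℤ, 0 ≤ x1 → 0 ≤ x2 → F3 x1 x2 c = 0 →
      (2 * c + 1) ∣ ((x1 - x2) ^ 2 + c * (c - 1)) ∧
      x1 = ((x1 - x2) ^ 2 + (2 * c + 1) * (x1 - x2) + c * (c - 1)) / (2 * (2 * c + 1)) ∧
      x2 = ((x1 - x2) ^ 2 - (2 * c + 1) * (x1 - x2) + c * (c - 1)) / (2 * (2 * c + 1))) := by
  have hne : (2 * (2 * c + 1)) ≠ 0 := by omega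
  constructor
  · rintro u ⟨k, hk⟩
    have he : Even ((2 * c + 1) * (k + u)) := by
      obtain ⟨a, ha⟩ := Int.even_mul_succ_self u
      obtain ⟨b, hb⟩ := Int.even_mul_succ_self (c - 1)
      exact ⟨a + b + c * u, by linear_combination ha + hb - hk⟩
    have hodd : ¬ Even (2 * c + 1) := by simp [Int.even_iff]
    have hku : Even (k + u) := by
      rcases (Int.even_mul.mp he) with h | h
      · exact absurd h hodd
      · exact h
    obtain ⟨m, hm⟩ := hku
    obtain ⟨m', hm'⟩ : Even (k - u) := ⟨m - u, by omega⟩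
    have hA : u ^ 2 + (2 * c + 1) * u + c * (c - 1) = 2 * (2 * c + 1) * m := by
      linear_combination hk + (2 * c + 1) * hm
    have hB : u ^ 2 - (2 * c + 1) * u + c * (c - 1) = 2 * (2 * c + 1) * m' := by
      linear_combination hk + (2 * c + 1) * hm'
    have hmpos : 0 ≤ m := by nlinarith [sq_nonneg (2 * u + 2 * c + 1)]
    have hm'pos : 0 ≤ m' := by nlinarith [sq_nonneg (2 * u - 2 * c - 1)]
    rw [hA, hB, Int.mul_ediv_cancel_left _ hne, Int.mul_ediv_cancel_left _ hne]
    refine ⟨⟨m, rfl⟩, ⟨m', rfl⟩, hmpos, hm'pos, ?_⟩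
    have hd : m - m' = u := by omega
    have hs : m + m' = k := by omega
    unfold F3
    linear_combination (m - m' + u) * hd - (2 * c + 1) * hs + hk
  · intro x1 x2 h1 h2 hF
    unfold F3 at hF
    have key : (x1 - x2) ^ 2 + c * (c - 1) = (2 * c + 1) * (x1 + x2) := by
      linear_combination hF
    refine ⟨⟨x1 + x2, key⟩, ?_, ?_⟩
    · have h : (x1 - x2) ^ 2 + (2 * c + 1) * (x1 - x2) + c * (c - 1) = 2 * (2 * c + 1) * x1 := by
        linear_combination key
      rw [h, Int.mul_ediv_cancel_left _ hne]
    · have h : (x1 - x2) ^ 2 - (2 * c + 1) * (x1 - x2) + c * (c - 1) = 2 * (2 * c + 1) * x2 := by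
        linear_combination key
      rw [h, Int.mul_ediv_cancel_left _ hne]
end

section
/- The map (x_1, x_2, x_3) ↦ (2(x_2 − x_3), 2(x_1 − x_2 − x_3) − 1, 2(x_2 + x_3 + 1)) is a bijection from {x ∈ ℤ^3 : F_3(x) = 0} onto {w ∈ ℤ^3 : w_1^2 + w_2^2 − w_3^2 = −3 and w_2 is odd}, with inverse x_1 = (w_2 + w_3 − 1)/2, x_2 = (w_1 + w_3 − 2)/4, x_3 = (w_3 − w_1 − 2)/4. Moreover, for a solution x with x_1 ≤ x_2 ≤ x_3, all coordinates of x are non-negative (i.e., x is a 3-color fair game) if and only if its image w satisfies w_1 ≤ 0, w_2 ≤ 0 and w_3 ≥ 0. -/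
/-- The affine map from the fair-game equation to the Lorentzian form
`w₁² + w₂² − w₃² = −3`. -/
def phi (x : ℤ × ℤ × ℤ) : ℤ × ℤ × ℤ :=
  (2 * (x.2.1 - x.2.2), 2 * (x.1 - x.2.1 - x.2.2) - 1, 2 * (x.2.1 + x.2.2 + 1))

/-- `phi` is a bijection from the solutions of `F_3 = 0` onto the solutions of
`w₁² + w₂² − w₃² = −3` with `w₂` odd, with the displayed inverse; under it, an
ascending solution is a fair game iff its image satisfies `w₁, w₂ ≤ 0 ≤ w₃`. -/
theorem stmt_17 :
    Set.BijOn phi {x : ℤ × ℤ × ℤ | F3 x.1 x.2.1 x.2.2 = 0}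
      {w : ℤ × ℤ × ℤ | w.1 ^ 2 + w.2.1 ^ 2 - w.2.2 ^ 2 = -3 ∧ Odd w.2.1} ∧
    (∀ x : ℤ × ℤ × ℤ, F3 x.1 x.2.1 x.2.2 = 0 →
      x.1 = ((phi x).2.1 + (phi x).2.2 - 1) / 2 ∧
      x.2.1 = ((phi x).1 + (phi x).2.2 - 2) / 4 ∧
      x.2.2 = ((phi x).2.2 - (phi x).1 - 2) / 4) ∧
    (∀ x : ℤ × ℤ × ℤ, F3 x.1 x.2.1 x.2.2 = 0 → x.1 ≤ x.2.1 → x.2.1 ≤ x.2.2 →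
      ((0 ≤ x.1 ∧ 0 ≤ x.2.1 ∧ 0 ≤ x.2.2) ↔
        ((phi x).1 ≤ 0 ∧ (phi x).2.1 ≤ 0 ∧ 0 ≤ (phi x).2.2))) := by
  refine ⟨⟨?_, ?_, ?_⟩, ?_, ?_⟩
  · -- MapsTo
    rintro ⟨x, y, z⟩ h
    simp only [Set.mem_setOf_eq, F3] at h
    refine ⟨?_, ⟨x - y - z - 1, by simp [phi]; ring⟩⟩
    simp only [phi]
    linear_combination 4 * h
  · -- InjOn
    rintro ⟨a1, a2, a3⟩ - ⟨b1, b2, b3⟩ - h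
    simp only [phi, Prod.ext_iff] at h ⊢
    omega
  · -- SurjOn
    rintro ⟨w1, w2, w3⟩ ⟨heq, a, rfl⟩
    simp only [Set.mem_setOf_eq] at heq
    rcases Int.even_or_odd w1 with ⟨c, rfl⟩ | ⟨c, rfl⟩
    · rcases Int.even_or_odd w3 with ⟨b, rfl⟩ | ⟨b, rfl⟩
      · -- w1 = 2c, w3 = 2b : the genuine case
        obtain ⟨m, hm⟩ : Even (a * (a + 1)) := Int.even_mul_succ_self a
        rcases Int.even_or_odd b with ⟨p, rfl⟩ | ⟨p, rfl⟩ <;>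
          rcases Int.even_or_odd c with ⟨q, rfl⟩ | ⟨q, rfl⟩
        · exfalso
          have h16 : 16 * (p * p) - 16 * (q * q) = 8 * m + 4 := by
            linear_combination -heq + 4 * hm
          set P := p * p
          set Q := q * q
          omega
        · -- b even (=2p), c odd (=2q+1)
          refine ⟨(a + (p + p), p + q, p - q - 1), ?_, ?_⟩
          · have key : 16 * (p * p) = 16 * (q * q) + 16 * q + 4 * (a * (a + 1)) + 8 := by
              linear_combination -heq
            simp only [Set.mem_setOf_eq, F3]
            linarith [key]
          · simp only [phi, Prod.ext_iff]
            refine ⟨by ring, by ring, by ring⟩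
        · -- b odd (=2p+1), c even (=2q)
          refine ⟨(a + (2 * p + 1), p + q, p - q), ?_, ?_⟩
          · have key : 16 * (p * p) + 16 * p = 16 * (q * q) + 4 * (a * (a + 1)) := by
              linear_combination -heq
            simp only [Set.mem_setOf_eq, F3]
            linarith [key]
          · simp only [phi, Prod.ext_iff]
            refine ⟨by ring, by ring, by ring⟩
        · exfalso
          have h16 : 16 * (p * p) + 16 * p - 16 * (q * q) - 16 * q = 8 * m + 4 := by
            linear_combination -heq + 4 * hm
          set P := p * p
          set Q := q * q
          omega
      · -- w1 even, w3 odd : impossible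
        exfalso
        have h4 : 4 * (c * c + a * (a + 1) - b * (b + 1)) = -3 := by
          linear_combination heq
        set N := c * c + a * (a + 1) - b * (b + 1)
        omega
    · rcases Int.even_or_odd w3 with ⟨b, rfl⟩ | ⟨b, rfl⟩
      · -- w1 odd, w3 even : impossible
        exfalso
        have h4 : 4 * (c * (c + 1) + a * (a + 1) - b * b) = -5 := by
          linear_combination heq
        set N := c * (c + 1) + a * (a + 1) - b * b
        omega
      · -- w1 odd, w3 odd : impossible
        exfalso
        obtain ⟨m, hm⟩ : Even (a * (a + 1)) := Int.even_mul_succ_self a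
        obtain ⟨n, hn⟩ : Even (c * (c + 1)) := Int.even_mul_succ_self c
        obtain ⟨k, hk⟩ : Even (b * (b + 1)) := Int.even_mul_succ_self b
        have h8 : 8 * n + 8 * m - 8 * k = -4 := by
          linear_combination heq - 4 * hn - 4 * hm + 4 * hk
        omega
  · -- inverse formulas
    rintro ⟨x, y, z⟩ -
    simp only [phi]
    omega
  · -- fair game criterion
    rintro ⟨x, y, z⟩ hF hxy hyz
    simp only [F3] at hF
    replace hxy : x ≤ y := hxy
    replace hyz : y ≤ z := hyz
    simp only [phi]
    constructor
    · rintro ⟨hx, hy, hz⟩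
      exact ⟨by omega, by omega, by omega⟩
    · rintro ⟨h1, h2, h3⟩
      have hz0 : 0 ≤ z := by omega
      have hkey : (4 * z + 2) * (4 * y + 2) = (2 * (x - y - z) - 1) ^ 2 + 3 := by
        linear_combination -4 * hF
      have hy0 : 0 ≤ y := by
        by_contra hy
        push_neg at hy
        nlinarith [sq_nonneg (2 * (x - y - z) - 1)]
      have hx0 : 0 ≤ x := by
        by_contra hx
        push_neg at hx
        have hkey2 : (2 * (y + z + 1)) ^ 2 =
            (2 * (y - z)) ^ 2 + (2 * (x - y - z) - 1) ^ 2 + 3 := by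
          linear_combination -4 * hF
        nlinarith [sq_nonneg (2 * (y - z)), h2, h3, hx]
      exact ⟨hx0, hy0, by omega⟩
end
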